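/- Let (X, F, μ) be a measure space, n ≥ 1, and let t : X → ℝ^n be measurable (carrier term k ≡ 0). For θ ∈ ℝ^n set Z(θ) := ∫ exp(⟨θ, t(x)⟩) dμ(x), F(θ) := log Z(θ), p_θ(x) := exp(⟨θ, t(x)⟩ - F(θ)). If θ ∈ ℝ^n satisfies 0 < Z(θ) < ∞ and 0 < Z(2θ) < ∞, then for every point ω ∈ X the informational energy satisfies I(p_θ) = ∫ p_θ(x)² dμ(x) = p_θ(ω)² / p_{2θ}(ω). -/

import Mathlib

open MeasureTheory
open scoped ENNReal

/-- Partition function of an exponential family with sufficient statistic `t` and no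
carrier term. -/
noncomputable def expFamZ₀ {X : Type*} [MeasurableSpace X] (μ : Measure X) {n : ℕ}
    (t : X → Fin n → ℝ) (θ : Fin n → ℝ) : ℝ≥0∞ :=
  ∫⁻ x, ENNReal.ofReal (Real.exp (∑ i, θ i * t x i)) ∂μ

/-- Cumulant function (log-normalizer) of the exponential family with no carrier
term. -/
noncomputable def expFamF₀ {X : Type*} [MeasurableSpace X] (μ : Measure X) {n : ℕ}
    (t : X → Fin n → ℝ) (θ : Fin n → ℝ) : ℝ :=
  Real.log (expFamZ₀ μ t θ).toReal

/-- Density of the exponential family with no carrier term. -/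
noncomputable def expFamPdf₀ {X : Type*} [MeasurableSpace X] (μ : Measure X) {n : ℕ}
    (t : X → Fin n → ℝ) (θ : Fin n → ℝ) (x : X) : ℝ :=
  Real.exp ((∑ i, θ i * t x i) - expFamF₀ μ t θ)

/-- Jensen divergence of the cumulant function. -/
noncomputable def jensenF₀ {X : Type*} [MeasurableSpace X] (μ : Measure X) {n : ℕ}
    (t : X → Fin n → ℝ) (θ θ' : Fin n → ℝ) : ℝ :=
  (expFamF₀ μ t θ + expFamF₀ μ t θ') / 2 - expFamF₀ μ t (((1 : ℝ) / 2) • (θ + θ'))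


/-- With no carrier term, the informational energy of `p_θ` equals
`p_θ(ω)² / p_{2θ}(ω)` for every point `ω` of the sample space. -/
theorem informationalEnergy_expFam_noCarrier_pointwise {X : Type*}
    [MeasurableSpace X] (μ : Measure X) {n : ℕ} (hn : 1 ≤ n)
    (t : X → Fin n → ℝ) (ht : Measurable t) (θ : Fin n → ℝ)
    (hZ : 0 < expFamZ₀ μ t θ) (hZ' : expFamZ₀ μ t θ < ⊤)
    (hZ2 : 0 < expFamZ₀ μ t ((2 : ℝ) • θ)) (hZ2' : expFamZ₀ μ t ((2 : ℝ) • θ) < ⊤) :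
    ∀ ω : X, ∫ x, (expFamPdf₀ μ t θ x) ^ 2 ∂μ
      = (expFamPdf₀ μ t θ ω) ^ 2 / expFamPdf₀ μ t ((2 : ℝ) • θ) ω := by
  intro ω
  set g : X → ℝ := fun x => ∑ i, θ i * t x i with hg
  have hmeas : Measurable g := by
    apply Finset.measurable_sum
    intro i _
    exact measurable_const.mul ((measurable_pi_apply i).comp ht)
  have h2 : ∀ x, (∑ i, ((2 : ℝ) • θ) i * t x i) = 2 * g x := by
    intro x
    simp [hg, Finset.mul_sum, mul_assoc]
  have hZ2pos : 0 < (expFamZ₀ μ t ((2 : ℝ) • θ)).toReal :=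
    ENNReal.toReal_pos hZ2.ne' hZ2'.ne
  have hF2 : Real.exp (expFamF₀ μ t ((2 : ℝ) • θ)) = (expFamZ₀ μ t ((2 : ℝ) • θ)).toReal :=
    Real.exp_log hZ2pos
  have hint : ∫ x, Real.exp (2 * g x) ∂μ = (expFamZ₀ μ t ((2 : ℝ) • θ)).toReal := by
    rw [expFamZ₀,
      integral_eq_lintegral_of_nonneg_ae
        (Filter.Eventually.of_forall fun x => (Real.exp_pos _).le)
        ((hmeas.const_mul 2).exp.aestronglyMeasurable)]
    congr 1
    exact lintegral_congr fun x => by rw [h2]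
  have hpdf : ∀ x, (expFamPdf₀ μ t θ x) ^ 2
      = Real.exp (2 * g x) * Real.exp (-(2 * expFamF₀ μ t θ)) := by
    intro x
    rw [expFamPdf₀, ← Real.exp_add, ← Real.exp_nat_mul]
    ring_nf
    simp only [hg]
    ring_nf
  calc ∫ x, (expFamPdf₀ μ t θ x) ^ 2 ∂μ
      = ∫ x, Real.exp (2 * g x) * Real.exp (-(2 * expFamF₀ μ t θ)) ∂μ := by
        simp_rw [hpdf]
    _ = (∫ x, Real.exp (2 * g x) ∂μ) * Real.exp (-(2 * expFamF₀ μ t θ)) :=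
        integral_mul_const _ _
    _ = Real.exp (expFamF₀ μ t ((2 : ℝ) • θ)) * Real.exp (-(2 * expFamF₀ μ t θ)) := by
        rw [hint, hF2]
    _ = (expFamPdf₀ μ t θ ω) ^ 2 / expFamPdf₀ μ t ((2 : ℝ) • θ) ω := by
        rw [expFamPdf₀, expFamPdf₀, ← Real.exp_nat_mul, h2, ← Real.exp_add,
          ← Real.exp_sub]
        ring_nf
        simp only [hg]
        ring_nf
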